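/- For additively separable hedonic games on n ≥ 2 agents with arbitrary real weights (declaration domain D = all weight profiles), no strategyproof mechanism satisfies the bounded approximation property: every mechanism M : D → partitions that satisfies BAPX fails strategyproofness. -/
import Mathlib


noncomputable section

open Finset

/-- A partition of the agents `Fin n`, given by the block (coalition) of each agent. -/
structure HGPartition (n : ℕ) where
  block : Fin n → Finset (Fin n)
  mem_block : ∀ i, i ∈ block i
  block_eq : ∀ i j, j ∈ block i → block j = block i

/-- ASHG utility of an agent with score row `wi` for a coalition `C` containing her. -/
def uA {n : ℕ} (wi : Fin n → ℝ) (C : Finset (Fin n)) : ℝ :=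
  ∑ j ∈ C, wi j

/-- FHG utility of an agent with score row `wi` for a coalition `C` containing her. -/
def uF {n : ℕ} (wi : Fin n → ℝ) (C : Finset (Fin n)) : ℝ :=
  (∑ j ∈ C, wi j) / C.card

/-- Utilitarian social welfare in ASHGs. -/
def swA {n : ℕ} (w : Fin n → Fin n → ℝ) (π : HGPartition n) : ℝ :=
  ∑ i, uA (w i) (π.block i)

/-- Utilitarian social welfare in FHGs. -/
def swF {n : ℕ} (w : Fin n → Fin n → ℝ) (π : HGPartition n) : ℝ :=
  ∑ i, uF (w i) (π.block i)

/-- A weight profile has zero scores on the diagonal. -/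
def ZeroDiag {n : ℕ} (w : Fin n → Fin n → ℝ) : Prop := ∀ i, w i i = 0

/-- Strategyproofness for ASHGs on the domain of all (zero-diagonal) weight profiles. -/
def SP_A {n : ℕ} (M : (Fin n → Fin n → ℝ) → HGPartition n) : Prop :=
  ∀ (i : Fin n) (wi di : Fin n → ℝ) (d : Fin n → Fin n → ℝ),
    wi i = 0 → di i = 0 → ZeroDiag d →
    uA wi ((M (Function.update d i di)).block i) ≤
      uA wi ((M (Function.update d i wi)).block i)

/-- Bounded approximation property for ASHGs: some `r ≥ 1` bounds `opt_d / SW_d(M(d))`,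
i.e. every partition's welfare is at most `r` times that of the mechanism's output. -/
def BAPX_A {n : ℕ} (M : (Fin n → Fin n → ℝ) → HGPartition n) : Prop :=
  ∃ r : ℝ, 1 ≤ r ∧ ∀ d : Fin n → Fin n → ℝ, ZeroDiag d →
    ∀ π : HGPartition n, swA d π ≤ r * swA d (M d)

def singletonPart (n : ℕ) : HGPartition n where
  block i := {i}
  mem_block i := Finset.mem_singleton_self i
  block_eq i j h := by rw [Finset.mem_singleton.mp h]

def pairPart (n : ℕ) [NeZero n] : HGPartition n where
  block i := if i = 0 ∨ i = 1 then ({0,1} : Finset (Fin n)) else {i}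
  mem_block i := by
    by_cases h : i = 0 ∨ i = 1
    · rcases h with h | h <;> simp [h]
    · simp [h]
  block_eq i j h := by
    by_cases hi : i = 0 ∨ i = 1
    · simp only [hi, if_true, Finset.mem_insert, Finset.mem_singleton] at h
      rcases h with h | h <;> simp [hi, h]
    · simp only [hi, if_false, Finset.mem_singleton] at h
      rw [h]

def prof (n : ℕ) [NeZero n] (a : ℝ) : Fin n → Fin n → ℝ :=
  fun i j => if i = 0 ∧ j = 1 then a else if i = 1 ∧ j = 0 then -2 else 0

lemma mem_block_symm {n : ℕ} (π : HGPartition n) {i j : Fin n}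
    (h : j ∈ π.block i) : i ∈ π.block j := by
  rw [π.block_eq i j h]; exact π.mem_block i

lemma swA_prof {n : ℕ} [NeZero n] (a : ℝ) (h01 : (0 : Fin n) ≠ 1) (π : HGPartition n) :
    swA (prof n a) π = (if (1 : Fin n) ∈ π.block 0 then a else 0)
      + (if (0 : Fin n) ∈ π.block 1 then (-2 : ℝ) else 0) := by
  unfold swA uA prof
  have key : ∀ i : Fin n,
      (∑ j ∈ π.block i, if i = 0 ∧ j = 1 then a else if i = 1 ∧ j = 0 then (-2:ℝ) else 0)
      = (if i = 0 then (if (1 : Fin n) ∈ π.block 0 then a else 0) else 0)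
      + (if i = 1 then (if (0 : Fin n) ∈ π.block 1 then (-2:ℝ) else 0) else 0) := by
    intro i
    by_cases hi0 : i = 0
    · subst hi0
      simp [h01, Ne.symm h01, Finset.sum_ite_eq']
    · by_cases hi1 : i = 1
      · subst hi1
        simp [hi0, Finset.sum_ite_eq']
      · simp [hi0, hi1]
  rw [Finset.sum_congr rfl (fun i _ => key i), Finset.sum_add_distrib]
  simp [Finset.sum_ite_eq']

lemma zeroDiag_prof {n : ℕ} [NeZero n] (a : ℝ) (h01 : (0 : Fin n) ≠ 1) :
    ZeroDiag (prof n a) := by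
  intro i
  unfold prof
  rcases eq_or_ne i 0 with h | h
  · subst h; simp [h01]
  · simp [h]

lemma update_prof {n : ℕ} [NeZero n] (a : ℝ) :
    Function.update (prof n 0) 0 (prof n a 0) = prof n a := by
  funext i
  rcases eq_or_ne i 0 with h | h
  · subst h; simp
  · rw [Function.update_of_ne h]
    funext j
    simp [prof, h]

lemma uA_row {n : ℕ} [NeZero n] (a : ℝ) (h01 : (0 : Fin n) ≠ 1) (C : Finset (Fin n)) :
    uA (prof n a 0) C = if (1 : Fin n) ∈ C then a else 0 := by
  unfold uA prof
  simp [h01, Finset.sum_ite_eq']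

theorem no_SP_mechanism_is_BAPX_ASHG (n : ℕ) (hn : 2 ≤ n)
    (M : (Fin n → Fin n → ℝ) → HGPartition n) (hM : BAPX_A M) :
    ¬ SP_A M := by
  haveI : NeZero n := ⟨by omega⟩
  have h01 : (0 : Fin n) ≠ 1 := by
    intro h
    have := congrArg Fin.val h
    rw [Fin.val_zero, Fin.val_one', Nat.mod_eq_of_lt (by omega)] at this
    omega
  intro hSP
  obtain ⟨r, hr, hB⟩ := hM
  have hnotA : (1 : Fin n) ∉ (M (prof n 1)).block 0 := by
    intro hmem
    have hmem' : (0 : Fin n) ∈ (M (prof n 1)).block 1 := mem_block_symm _ hmem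
    have h0 := hB (prof n 1) (zeroDiag_prof 1 h01) (singletonPart n)
    rw [swA_prof 1 h01, swA_prof 1 h01] at h0
    simp [singletonPart, h01, Ne.symm h01, hmem, hmem'] at h0
    nlinarith
  have hyesB : (1 : Fin n) ∈ (M (prof n 3)).block 0 := by
    by_contra hmem
    have hmem' : (0 : Fin n) ∉ (M (prof n 3)).block 1 := fun h => hmem (mem_block_symm _ h)
    have h0 := hB (prof n 3) (zeroDiag_prof 3 h01) (pairPart n)
    rw [swA_prof 3 h01, swA_prof 3 h01] at h0
    simp [pairPart, hmem, hmem', h01, Ne.symm h01] at h0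
    linarith
  have hsp := hSP 0 (prof n 1 0) (prof n 3 0) (prof n 0)
    (by simp [prof, h01]) (by simp [prof, h01]) (zeroDiag_prof 0 h01)
  rw [update_prof, update_prof, uA_row 1 h01, uA_row 1 h01] at hsp
  simp [hnotA, hyesB] at hsp
  linarith
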